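/- Let L and H be Lie algebras over a field F and suppose φ : U(L) → U(H) is an isomorphism of F-algebras. Then there exists an algebra isomorphism ψ : U(L) → U(H) satisfying ψ(ω(L)) = ω(H), where ω denotes the augmentation ideal. -/

import Mathlib

open UniversalEnvelopingAlgebra

attribute [local instance 100] LieRing.ofAssociativeRing

noncomputable def augmentation (F : Type*) (L : Type*) [Field F] [LieRing L] [LieAlgebra F L] :
    UniversalEnvelopingAlgebra F L →ₐ[F] F :=
  UniversalEnvelopingAlgebra.lift F (0 : L →ₗ⁅F⁆ F)

noncomputable def augIdeal (F : Type*) (L : Type*) [Field F] [LieRing L] [LieAlgebra F L] :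
    Submodule F (UniversalEnvelopingAlgebra F L) :=
  LinearMap.ker (augmentation F L).toLinearMap

section Aux

variable (F : Type*) (H : Type*) [Field F] [LieRing H] [LieAlgebra F H]

/-- The Lie algebra hom `h ↦ ι h + c h • 1` for `c` a linear functional killing brackets. -/
noncomputable def shiftLie (c : H →ₗ[F] F) (hc : ∀ x y : H, c ⁅x, y⁆ = 0) :
    H →ₗ⁅F⁆ UniversalEnvelopingAlgebra F H where
  toFun h := ι F h + algebraMap F _ (c h)
  map_add' x y := by simp only [map_add]; abel
  map_smul' r x := by
    simp only [map_smul, Algebra.smul_def, Algebra.algebraMap_self,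
      RingHom.id_apply, map_mul, mul_add]
  map_lie' {x y} := by
    simp only [Ring.lie_def, map_add, LieHom.map_lie, hc, map_zero, add_zero,
      Algebra.algebraMap_eq_smul_one, mul_add, add_mul, smul_mul_assoc, mul_smul_comm,
      mul_one, one_mul, smul_add, smul_smul, mul_comm (c y) (c x)]
    abel

noncomputable def shiftHom (c : H →ₗ[F] F) (hc : ∀ x y : H, c ⁅x, y⁆ = 0) :
    UniversalEnvelopingAlgebra F H →ₐ[F] UniversalEnvelopingAlgebra F H :=
  UniversalEnvelopingAlgebra.lift F (shiftLie F H c hc)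

theorem shiftHom_comp (c : H →ₗ[F] F) (hc : ∀ x y : H, c ⁅x, y⁆ = 0)
    (hc' : ∀ x y : H, (-c) ⁅x, y⁆ = 0) :
    (shiftHom F H c hc).comp (shiftHom F H (-c) hc') = AlgHom.id F _ := by
  ext x
  simp [shiftHom, shiftLie, lift_ι_apply, map_add, map_neg, map_sub]

/-- The shift automorphism. -/
noncomputable def shiftEquiv (c : H →ₗ[F] F) (hc : ∀ x y : H, c ⁅x, y⁆ = 0) :
    UniversalEnvelopingAlgebra F H ≃ₐ[F] UniversalEnvelopingAlgebra F H :=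
  AlgEquiv.ofAlgHom (shiftHom F H c hc)
    (shiftHom F H (-c) (fun x y => by simp [hc]))
    (shiftHom_comp F H c hc _)
    (by
      have := shiftHom_comp F H (-c) (fun x y => by simp [hc])
        (fun x y => by simp [hc])
      simpa using this)

@[simp] theorem shiftEquiv_ι (c : H →ₗ[F] F) (hc : ∀ x y : H, c ⁅x, y⁆ = 0) (h : H) :
    shiftEquiv F H c hc (ι F h) = ι F h + algebraMap F _ (c h) := by
  simp [shiftEquiv, shiftHom, lift_ι_apply, shiftLie]

end Aux

/-- if `U(L) ≅ U(H)` as `F`-algebras, then there is an algebra isomorphism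
`ψ : U(L) → U(H)` with `ψ(ω(L)) = ω(H)`. -/
theorem exists_algEquiv_mapping_augIdeal (F : Type*) (L H : Type*) [Field F]
    [LieRing L] [LieAlgebra F L] [LieRing H] [LieAlgebra F H]
    (φ : UniversalEnvelopingAlgebra F L ≃ₐ[F] UniversalEnvelopingAlgebra F H) :
    ∃ ψ : UniversalEnvelopingAlgebra F L ≃ₐ[F] UniversalEnvelopingAlgebra F H,
      Submodule.map (ψ : UniversalEnvelopingAlgebra F L →ₗ[F] UniversalEnvelopingAlgebra F H)
        (augIdeal F L) = augIdeal F H := by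
  -- θ : U(H) → F, the pullback of ε_L along φ⁻¹
  set θ : UniversalEnvelopingAlgebra F H →ₐ[F] F :=
    (augmentation F L).comp φ.symm.toAlgHom with hθ
  set c : H →ₗ[F] F := θ.toLinearMap.comp (ι F : H →ₗ⁅F⁆ _).toLinearMap with hcdef
  have hc : ∀ x y : H, c ⁅x, y⁆ = 0 := by
    intro x y
    simp only [hcdef, LinearMap.comp_apply, LieHom.coe_toLinearMap, AlgHom.toLinearMap_apply,
      LieHom.map_lie, Ring.lie_def, map_sub, map_mul]
    ring
  refine ⟨φ.trans (shiftEquiv F H c hc), ?_⟩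
  -- ε_H ∘ ψ = ε_L
  have key : (augmentation F H).comp ((shiftEquiv F H c hc).toAlgHom.comp φ.toAlgHom)
      = augmentation F L := by
    have h1 : (augmentation F H).comp (shiftEquiv F H c hc).toAlgHom = θ := by
      ext x
      have h0 : augmentation F H (ι F x) = 0 := by
        simp [augmentation, lift_ι_apply]
      change augmentation F H (shiftEquiv F H c hc (ι F x)) = θ (ι F x)
      rw [shiftEquiv_ι, map_add, h0, zero_add]
      simp [hcdef]
    rw [← AlgHom.comp_assoc, h1]
    ext x
    simp [hθ]
  have keyx : ∀ u : UniversalEnvelopingAlgebra F L,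
      augmentation F H ((shiftEquiv F H c hc) (φ u)) = augmentation F L u := by
    intro u
    have := congrArg (fun f => f u) key
    simpa using this
  apply le_antisymm
  · rintro x ⟨u, hu, rfl⟩
    simp only [augIdeal, LinearMap.mem_ker, AlgHom.toLinearMap_apply] at hu ⊢
    simpa [keyx u] using hu
  · rintro x hx
    simp only [augIdeal, LinearMap.mem_ker, AlgHom.toLinearMap_apply] at hx
    refine ⟨φ.symm ((shiftEquiv F H c hc).symm x), ?_, by simp⟩
    simp only [augIdeal, SetLike.mem_coe, LinearMap.mem_ker, AlgHom.toLinearMap_apply]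
    rw [← keyx (φ.symm ((shiftEquiv F H c hc).symm x))]
    simp [hx]
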